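/- arXiv:2204.04858 — 2 statements merged into one kernel-verified Lean document; each statement's English description precedes it below -/
import Mathlib

section
/- Let X be a real-valued random variable and a, b > 0 such that for every τ ≥ 2 the moment bound ‖X‖_τ ≤ √τ·a + τ·b holds, where ‖X‖_τ = (E|X|^τ)^{1/τ}. Then for every ζ ∈ (0,1), with probability at least 1 − ζ, |X| ≤ e·( a·√(log(e/ζ)) + b·log(e/ζ) ). -/
open MeasureTheory Real
open scoped ENNReal NNReal

noncomputable section

set_option maxHeartbeats 1000000 in
/-- **From moment bounds to a high-probability bound** (Lemma 3, from Bousquet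
et al.): if `‖X‖_τ ≤ √τ·a + τ·b` for every `τ ≥ 2`, then for every `ζ ∈ (0,1)`,
with probability at least `1 − ζ`,
`|X| ≤ e·(a·√(log(e/ζ)) + b·log(e/ζ))`. -/
theorem moment_bound_to_tail_bound
    {Ω : Type*} [MeasurableSpace Ω] (μ : Measure Ω) [IsProbabilityMeasure μ]
    (X : Ω → ℝ) (hX : Measurable X) (a b : ℝ) (ha : 0 < a) (hb : 0 < b)
    (hmom : ∀ τ : ℝ, 2 ≤ τ →
      eLpNorm X (ENNReal.ofReal τ) μ ≤ ENNReal.ofReal (Real.sqrt τ * a + τ * b))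
    (ζ : ℝ) (hζ : ζ ∈ Set.Ioo (0 : ℝ) 1) :
    1 - ENNReal.ofReal ζ ≤
      μ {ω | |X ω| ≤
        Real.exp 1 *
          (a * Real.sqrt (Real.log (Real.exp 1 / ζ)) + b * Real.log (Real.exp 1 / ζ))} := by
  obtain ⟨hζ0, hζ1⟩ := hζ
  have hepos : (0:ℝ) < Real.exp 1 := Real.exp_pos 1
  have he1 : (1:ℝ) ≤ Real.exp 1 := by nlinarith [Real.exp_one_gt_d9]
  set L := Real.log (Real.exp 1 / ζ) with hLdef
  have hL1 : 1 ≤ L := by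
    have h1 : Real.exp 1 ≤ Real.exp 1 / ζ := by
      rw [le_div_iff₀ hζ0]; nlinarith
    calc (1:ℝ) = Real.log (Real.exp 1) := (Real.log_exp 1).symm
      _ ≤ L := Real.log_le_log (by positivity) h1
  have hLpos : 0 < L := lt_of_lt_of_le one_pos hL1
  have hexpL : Real.exp L = Real.exp 1 / ζ := Real.exp_log (by positivity)
  have hζexp : ζ * Real.exp L = Real.exp 1 := by
    rw [hexpL]; field_simp
  have hsL : 0 < Real.sqrt L := Real.sqrt_pos.2 hLpos
  have hsLsq : Real.sqrt L * Real.sqrt L = L := Real.mul_self_sqrt hLpos.le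
  have hsLle : Real.sqrt L ≤ L := by nlinarith [Real.sqrt_le_sqrt hL1, Real.sqrt_one]
  set t := Real.exp 1 * (a * Real.sqrt L + b * L) with htdef
  have ht : 0 < t := by positivity
  set τ := max 2 L with hτdef
  have hτ2 : (2:ℝ) ≤ τ := le_max_left _ _
  have hτpos : (0:ℝ) < τ := by linarith
  have hsτ : 0 < Real.sqrt τ := Real.sqrt_pos.2 hτpos
  have hNpos : 0 < Real.sqrt τ * a + τ * b := by positivity
  -- key real inequality
  have hkey : ((Real.sqrt τ * a + τ * b) / t) ^ τ ≤ ζ := by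
    rcases le_or_gt 2 L with h2L | hL2
    · -- τ = L
      have hτL : τ = L := max_eq_right h2L
      have hNt : (Real.sqrt τ * a + τ * b) / t = (Real.exp 1)⁻¹ := by
        rw [hτL, div_eq_iff ht.ne', htdef]
        field_simp
      rw [hNt, hτL, Real.inv_rpow hepos.le, Real.exp_one_rpow, ← Real.exp_neg]
      have hζe : Real.exp (-L) = ζ / Real.exp 1 := by
        rw [Real.exp_neg, hexpL]; field_simp
      rw [hζe, div_le_iff₀ hepos]
      nlinarith
    · -- τ = 2
      have hτ2' : τ = 2 := max_eq_left hL2.le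
      rw [hτ2']
      have hsq2 : Real.sqrt 2 ≤ 2 := by
        nlinarith [Real.sq_sqrt (by norm_num : (0:ℝ) ≤ 2), Real.sqrt_nonneg 2]
      have hratio : (Real.sqrt 2 * a + 2 * b) / t ≤ 2 / (Real.exp 1 * Real.sqrt L) := by
        rw [div_le_div_iff₀ ht (by positivity), htdef]
        have c1 : Real.sqrt 2 * a * Real.sqrt L ≤ 2 * (a * Real.sqrt L) := by
          nlinarith [mul_nonneg ha.le hsL.le]
        have c2 : b * Real.sqrt L ≤ b * L := mul_le_mul_of_nonneg_left hsLle hb.le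
        have main : (Real.sqrt 2 * a + 2 * b) * Real.sqrt L ≤ 2 * (a * Real.sqrt L + b * L) := by
          nlinarith [c1, c2]
        nlinarith [mul_le_mul_of_nonneg_left main hepos.le]
      have hnn : 0 ≤ (Real.sqrt 2 * a + 2 * b) / t := by positivity
      rw [show ((2:ℝ)) = ((2:ℕ):ℝ) by norm_num, Real.rpow_natCast]
      have h1 : ((Real.sqrt 2 * a + 2 * b) / t) ^ 2 ≤ (2 / (Real.exp 1 * Real.sqrt L)) ^ 2 := by
        exact pow_le_pow_left₀ hnn hratio 2
      refine h1.trans ?_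
      rw [div_pow, div_le_iff₀ (by positivity)]
      have hA : (3 - L) * Real.exp L ≤ Real.exp 1 * Real.exp 1 := by
        have h2 := Real.add_one_le_exp (2 - L)
        have h3 : Real.exp (2 - L) * Real.exp L = Real.exp 1 * Real.exp 1 := by
          rw [← Real.exp_add, ← Real.exp_add]; norm_num
        nlinarith [Real.exp_pos L]
      have hζe2 : (3 - L) * Real.exp 1 ≤ ζ * (Real.exp 1 * Real.exp 1) := by
        calc (3 - L) * Real.exp 1 = ζ * ((3 - L) * Real.exp L) := by
              rw [show ζ * ((3 - L) * Real.exp L) = (3 - L) * (ζ * Real.exp L) by ring, hζexp]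
          _ ≤ ζ * (Real.exp 1 * Real.exp 1) := by
              exact mul_le_mul_of_nonneg_left hA hζ0.le
      have hexpand : (Real.exp 1 * Real.sqrt L) ^ 2 = Real.exp 1 * Real.exp 1 * L := by
        rw [mul_pow, sq, sq, hsLsq]
      rw [hexpand]
      nlinarith [mul_le_mul_of_nonneg_left hζe2 hLpos.le, Real.exp_one_gt_d9,
        mul_nonneg (sub_nonneg.2 hL1) (sub_nonneg.2 hL2.le)]
  -- Markov side
  have hτne : ENNReal.ofReal τ ≠ 0 := by
    simp only [ne_eq, ENNReal.ofReal_eq_zero, not_le]; exact hτpos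
  have htne : ENNReal.ofReal t ≠ 0 := by
    simp only [ne_eq, ENNReal.ofReal_eq_zero, not_le]; exact ht
  have htoReal : (ENNReal.ofReal τ).toReal = τ := ENNReal.toReal_ofReal hτpos.le
  have markov := meas_ge_le_mul_pow_eLpNorm_enorm μ (f := X) (p := ENNReal.ofReal τ)
    hτne ENNReal.ofReal_ne_top hX.aestronglyMeasurable htne (fun h => absurd h ENNReal.ofReal_ne_top)
  have hchain : (ENNReal.ofReal t)⁻¹ ^ (ENNReal.ofReal τ).toReal *
      eLpNorm X (ENNReal.ofReal τ) μ ^ (ENNReal.ofReal τ).toReal ≤ ENNReal.ofReal ζ := by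
    rw [htoReal]
    calc (ENNReal.ofReal t)⁻¹ ^ τ * eLpNorm X (ENNReal.ofReal τ) μ ^ τ
        ≤ (ENNReal.ofReal t)⁻¹ ^ τ * (ENNReal.ofReal (Real.sqrt τ * a + τ * b)) ^ τ := by
          gcongr
          exact hmom τ hτ2
      _ = (ENNReal.ofReal ((Real.sqrt τ * a + τ * b) / t)) ^ τ := by
          rw [← ENNReal.ofReal_inv_of_pos ht, ← ENNReal.mul_rpow_of_nonneg _ _ hτpos.le,
            ← ENNReal.ofReal_mul (by positivity), inv_mul_eq_div]
      _ = ENNReal.ofReal (((Real.sqrt τ * a + τ * b) / t) ^ τ) :=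
          ENNReal.ofReal_rpow_of_pos (by positivity)
      _ ≤ ENNReal.ofReal ζ := ENNReal.ofReal_le_ofReal hkey
  have hcompl : μ {ω | |X ω| ≤ t}ᶜ ≤ ENNReal.ofReal ζ := by
    refine le_trans (measure_mono ?_) (markov.trans hchain)
    intro ω hω
    simp only [Set.mem_compl_iff, Set.mem_setOf_eq, not_le] at hω
    simp only [Set.mem_setOf_eq, Real.enorm_eq_ofReal_abs]
    exact ENNReal.ofReal_le_ofReal hω.le
  have hS : MeasurableSet {ω | |X ω| ≤ t} := measurableSet_le hX.abs measurable_const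
  rw [tsub_le_iff_right]
  calc (1:ℝ≥0∞) = μ {ω | |X ω| ≤ t} + μ {ω | |X ω| ≤ t}ᶜ :=
        (prob_add_prob_compl hS).symm
    _ ≤ μ {ω | |X ω| ≤ t} + ENNReal.ofReal ζ := by gcongr

end
end

section
/- Suppose ℓ : W × V × Z → [0,∞) is G-Lipschitz and A : Z^n → W × V is a γ-argument-stable map. Define h : Z^n → [0,∞) by h(S) = E_{z∼P}[ ℓ(A_w(S), A_v(S); z)² ] and h_i(S) = sup_{z_i' ∈ Z} h(z_1,...,z_{i-1}, z_i', z_{i+1},...,z_n). Then Σ_{i=1}^n ( h(S) − h_i(S) )² ≤ 8·G²·n·γ²·h(S) + 2·G⁴·n·γ⁴ for every S ∈ Z^n; that is, h is (8G²nγ², 2G⁴nγ⁴)-weakly self-bounded with witnesses h_i ≥ h. -/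
open MeasureTheory Real Set
open scoped BigOperators

noncomputable section

/-- Two datasets are adjacent if they differ in at most one entry. -/
def Adjacent {Z : Type*} {n : ℕ} (S S' : Fin n → Z) : Prop :=
  ∃ i : Fin n, ∀ j : Fin n, j ≠ i → S j = S' j

/-- `h(S) = E_{z∼P}[ ℓ(A_w(S), A_v(S); z)² ]`. -/
def hFun {Z : Type*} [MeasurableSpace Z] (P : Measure Z) {p n : ℕ}
    (ℓ : EuclideanSpace ℝ (Fin p) → EuclideanSpace ℝ (Fin p) → Z → ℝ)
    (A : (Fin n → Z) → EuclideanSpace ℝ (Fin p) × EuclideanSpace ℝ (Fin p))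
    (S : Fin n → Z) : ℝ :=
  ∫ z, (ℓ (A S).1 (A S).2 z) ^ 2 ∂P

/-- `h_i(S) = sup_{z_i' ∈ Z} h(z_1, …, z_{i−1}, z_i', z_{i+1}, …, z_n)`. -/
def hIFun {Z : Type*} [MeasurableSpace Z] (P : Measure Z) {p n : ℕ}
    (ℓ : EuclideanSpace ℝ (Fin p) → EuclideanSpace ℝ (Fin p) → Z → ℝ)
    (A : (Fin n → Z) → EuclideanSpace ℝ (Fin p) × EuclideanSpace ℝ (Fin p))
    (i : Fin n) (S : Fin n → Z) : ℝ :=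
  sSup (Set.range fun z' : Z => hFun P ℓ A (Function.update S i z'))

/-- A differentiable function with gradient bounded by `G` is `G`-Lipschitz. -/
lemma lipschitz_of_gradient_bound {E : Type*} [NormedAddCommGroup E]
    [InnerProductSpace ℝ E] [CompleteSpace E]
    (f : E → ℝ) (G : ℝ) (hd : Differentiable ℝ f) (hb : ∀ x, ‖gradient f x‖ ≤ G) :
    ∀ x y, ‖f x - f y‖ ≤ G * ‖x - y‖ := by
  intro x y
  have hf : ∀ z ∈ (Set.univ : Set E), ‖fderiv ℝ f z‖ ≤ G := by
    intro z _
    have := hb z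
    rwa [gradient, (InnerProductSpace.toDual ℝ E).symm.norm_map] at this
  exact convex_univ.norm_image_sub_le_of_norm_fderiv_le
    (fun z _ => hd z) hf (Set.mem_univ y) (Set.mem_univ x)

/-- Cauchy–Schwarz: `(∫ a)² ≤ ∫ a²` over a probability measure. -/
lemma sq_integral_le {Z : Type*} [MeasurableSpace Z] (P : Measure Z)
    [IsProbabilityMeasure P]
    (a : Z → ℝ) (hm : Measurable a) (hi : Integrable (fun z => a z ^ 2) P) :
    (∫ z, a z ∂P) ^ 2 ≤ ∫ z, a z ^ 2 ∂P := by
  have hmem : MemLp a 2 P :=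
    (memLp_two_iff_integrable_sq hm.aestronglyMeasurable).mpr hi
  have h1 := ProbabilityTheory.variance_nonneg a P
  rw [ProbabilityTheory.variance_eq_sub hmem] at h1
  have h2 : ∫ x, (a ^ 2) x ∂P = ∫ z, a z ^ 2 ∂P := by simp [Pi.pow_apply]
  linarith [h2 ▸ h1]

/-- **`h` is weakly self-bounded** (part of the proof of Theorem 3(a)): if `ℓ` is
nonnegative and `G`-Lipschitz and `A` is `γ`-argument-stable, then
`Σ_{i=1}^n (h(S) − h_i(S))² ≤ 8G²nγ²·h(S) + 2G⁴nγ⁴`, with witnesses `h_i ≥ h`;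
that is, `h` is `(8G²nγ², 2G⁴nγ⁴)`-weakly self-bounded. -/
theorem hFun_weakly_self_bounded
    {Z : Type*} [MeasurableSpace Z] (P : Measure Z) [IsProbabilityMeasure P]
    {p n : ℕ} (G γ : ℝ) (hG : 0 < G) (hγ : 0 < γ)
    (ℓ : EuclideanSpace ℝ (Fin p) → EuclideanSpace ℝ (Fin p) → Z → ℝ)
    (hpos : ∀ w v z, 0 ≤ ℓ w v z)
    (hdW : ∀ v z, Differentiable ℝ (fun w => ℓ w v z))
    (hdV : ∀ w z, Differentiable ℝ (fun v => ℓ w v z))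
    (hlipW : ∀ w v z, ‖gradient (fun w' => ℓ w' v z) w‖ ≤ G)
    (hlipV : ∀ w v z, ‖gradient (fun v' => ℓ w v' z) v‖ ≤ G)
    (hmeas : ∀ w v, Measurable fun z => ℓ w v z)
    (hint : ∀ w v, Integrable (fun z => (ℓ w v z) ^ 2) P)
    (A : (Fin n → Z) → EuclideanSpace ℝ (Fin p) × EuclideanSpace ℝ (Fin p))
    (hstab : ∀ S S' : Fin n → Z, Adjacent S S' →
      ‖(A S).1 - (A S').1‖ + ‖(A S).2 - (A S').2‖ ≤ γ) :
    ∀ S : Fin n → Z,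
      (∀ i : Fin n, hFun P ℓ A S ≤ hIFun P ℓ A i S) ∧
      ∑ i : Fin n, (hFun P ℓ A S - hIFun P ℓ A i S) ^ 2 ≤
        8 * G ^ 2 * n * γ ^ 2 * hFun P ℓ A S + 2 * G ^ 4 * n * γ ^ 4 := by
  -- Lipschitz in each variable, hence jointly
  have lip2 : ∀ w v w' v' z, ℓ w' v' z ≤ ℓ w v z + G * (‖w - w'‖ + ‖v - v'‖) := by
    intro w v w' v' z
    have h1 : ‖ℓ w' v' z - ℓ w' v z‖ ≤ G * ‖v' - v‖ :=
      lipschitz_of_gradient_bound _ G (hdV w' z) (fun x => hlipV w' x z) v' v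
    have h2 : ‖ℓ w' v z - ℓ w v z‖ ≤ G * ‖w' - w‖ :=
      lipschitz_of_gradient_bound _ G (hdW v z) (fun x => hlipW x v z) w' w
    rw [Real.norm_eq_abs] at h1 h2
    have e1 : ‖v' - v‖ = ‖v - v'‖ := norm_sub_rev _ _
    have e2 : ‖w' - w‖ = ‖w - w'‖ := norm_sub_rev _ _
    rw [e1] at h1; rw [e2] at h2
    have := abs_le.mp h1
    have := abs_le.mp h2
    have h3 := (abs_le.mp h1).2
    have h4 := (abs_le.mp h2).2
    nlinarith
  -- integrability of ℓ itself
  have hint1 : ∀ w v, Integrable (fun z => ℓ w v z) P := by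
    intro w v
    have hg : Integrable (fun z => 1 + ℓ w v z ^ 2) P := (integrable_const 1).add (hint w v)
    refine hg.mono (hmeas w v).aestronglyMeasurable (ae_of_all _ fun z => ?_)
    have h0 := hpos w v z
    rw [Real.norm_eq_abs, Real.norm_eq_abs, abs_of_nonneg h0,
      abs_of_nonneg (by nlinarith : (0:ℝ) ≤ 1 + ℓ w v z ^ 2)]
    nlinarith [sq_nonneg (ℓ w v z - 1)]
  intro S
  set w := (A S).1 with hw
  set v := (A S).2 with hv
  set I : ℝ := ∫ z, ℓ w v z ∂P with hI
  have hInonneg : 0 ≤ I := integral_nonneg fun z => hpos w v z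
  have hI2 : I ^ 2 ≤ hFun P ℓ A S := by
    have := sq_integral_le P (fun z => ℓ w v z) (hmeas w v) (hint w v)
    simpa [hFun, ← hw, ← hv] using this
  set K : ℝ := 2 * G * γ * I + G ^ 2 * γ ^ 2 with hK
  have hK0 : 0 ≤ K := by positivity
  -- key one-sided stability bound
  have key : ∀ S' : Fin n → Z, Adjacent S S' → hFun P ℓ A S' ≤ hFun P ℓ A S + K := by
    intro S' hadj
    have hγ' : ‖w - (A S').1‖ + ‖v - (A S').2‖ ≤ γ := hstab S S' hadj
    have hpt : ∀ z, (ℓ (A S').1 (A S').2 z) ^ 2 ≤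
        (ℓ w v z) ^ 2 + 2 * G * γ * ℓ w v z + G ^ 2 * γ ^ 2 := by
      intro z
      have h1 : ℓ (A S').1 (A S').2 z ≤ ℓ w v z + G * γ := by
        have := lip2 w v (A S').1 (A S').2 z
        nlinarith [norm_nonneg (w - (A S').1), norm_nonneg (v - (A S').2)]
      have h0 := hpos (A S').1 (A S').2 z
      nlinarith [hpos w v z, mul_pos hG hγ]
    have hintR : Integrable
        (fun z => (ℓ w v z) ^ 2 + 2 * G * γ * ℓ w v z + G ^ 2 * γ ^ 2) P :=
      (((hint w v).add ((hint1 w v).const_mul _)).add (integrable_const _))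
    have hmono : hFun P ℓ A S' ≤
        ∫ z, ((ℓ w v z) ^ 2 + 2 * G * γ * ℓ w v z + G ^ 2 * γ ^ 2) ∂P :=
      integral_mono (hint (A S').1 (A S').2) hintR hpt
    have hR : ∫ z, ((ℓ w v z) ^ 2 + 2 * G * γ * ℓ w v z + G ^ 2 * γ ^ 2) ∂P
        = hFun P ℓ A S + K := by
      have i1 : Integrable (fun z => ℓ w v z ^ 2) P := hint w v
      have i2 : Integrable (fun z => 2 * G * γ * ℓ w v z) P := (hint1 w v).const_mul _
      have i3 : Integrable (fun z => ℓ w v z ^ 2 + 2 * G * γ * ℓ w v z) P := i1.add i2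
      rw [integral_add i3 (integrable_const _), integral_add i1 i2,
        integral_const_mul, integral_const]
      simp only [measure_univ, probReal_univ, ENNReal.toReal_one, one_smul, smul_eq_mul]
      simp only [hFun, hK, hI, ← hw, ← hv]
      ring
    linarith [hR ▸ hmono]
  -- per-index bounds on hIFun
  have main : ∀ i : Fin n, hFun P ℓ A S ≤ hIFun P ℓ A i S ∧
      hIFun P ℓ A i S ≤ hFun P ℓ A S + K := by
    intro i
    have hadj : ∀ z' : Z, Adjacent S (Function.update S i z') :=
      fun z' => ⟨i, fun j hj => (Function.update_of_ne hj _ _).symm⟩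
    have hmem : hFun P ℓ A S ∈
        Set.range fun z' : Z => hFun P ℓ A (Function.update S i z') :=
      ⟨S i, by simp [Function.update_eq_self]⟩
    have hbdd : BddAbove (Set.range fun z' : Z => hFun P ℓ A (Function.update S i z')) := by
      refine ⟨hFun P ℓ A S + K, ?_⟩
      rintro b ⟨z', rfl⟩
      exact key _ (hadj z')
    constructor
    · exact le_csSup hbdd hmem
    · refine csSup_le ⟨_, hmem⟩ ?_
      rintro b ⟨z', rfl⟩
      exact key _ (hadj z')
  refine ⟨fun i => (main i).1, ?_⟩
  have hterm : ∀ i : Fin n, (hFun P ℓ A S - hIFun P ℓ A i S) ^ 2 ≤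
      8 * G ^ 2 * γ ^ 2 * hFun P ℓ A S + 2 * G ^ 4 * γ ^ 4 := by
    intro i
    obtain ⟨h1, h2⟩ := main i
    have e1 : (hFun P ℓ A S - hIFun P ℓ A i S) ^ 2 ≤ K ^ 2 := by nlinarith
    have e2 : K ^ 2 ≤ 8 * G ^ 2 * γ ^ 2 * hFun P ℓ A S + 2 * G ^ 4 * γ ^ 4 := by
      have h8 : 8 * G ^ 2 * γ ^ 2 * I ^ 2 ≤ 8 * G ^ 2 * γ ^ 2 * hFun P ℓ A S :=
        mul_le_mul_of_nonneg_left hI2 (by positivity)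
      nlinarith [sq_nonneg (2 * G * γ * I - G ^ 2 * γ ^ 2)]
    linarith
  calc ∑ i : Fin n, (hFun P ℓ A S - hIFun P ℓ A i S) ^ 2
      ≤ ∑ _i : Fin n, (8 * G ^ 2 * γ ^ 2 * hFun P ℓ A S + 2 * G ^ 4 * γ ^ 4) :=
        Finset.sum_le_sum fun i _ => hterm i
    _ = 8 * G ^ 2 * n * γ ^ 2 * hFun P ℓ A S + 2 * G ^ 4 * n * γ ^ 4 := by
        simp [Finset.sum_const, Finset.card_univ, nsmul_eq_mul]; ring
end
end
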